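/- For any nonnegative integer n, the central binomial coefficient C(n, n/2) (taken to be 0 when n is odd) equals the integral over x from -2 to 2 of x^n / (π √(4 - x²)) dx. -/

import Mathlib

open intervalIntegral Real Finset

lemma cos_pow_even_int (k : ℕ) :
    (∫ x in (0:ℝ)..π, Real.cos x ^ (2*k)) = π * ∏ i ∈ Finset.range k, (2*(i:ℝ)+1)/(2*i+2) := by
  induction' k with k ih; · simp
  rw [prod_range_succ_comm, mul_left_comm, ← ih, Nat.mul_succ, integral_cos_pow]
  norm_cast
  simp [-Nat.cast_add]

lemma cos_pow_odd_int (k : ℕ) :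
    (∫ x in (0:ℝ)..π, Real.cos x ^ (2*k+1)) = 0 := by
  induction' k with k ih
  · simp
  · rw [show 2*(k+1)+1 = 2*k+1+2 by ring, integral_cos_pow]
    simp [ih]

lemma centralBinom_eq_prod (k : ℕ) :
    (Nat.centralBinom k : ℝ) = 4^k * ∏ i ∈ Finset.range k, (2*(i:ℝ)+1)/(2*i+2) := by
  induction' k with k ih
  · simp [Nat.centralBinom]
  · have h := Nat.succ_mul_centralBinom_succ k
    have h' : ((k:ℝ)+1) * (Nat.centralBinom (k+1) : ℝ) = 2 * (2*k+1) * Nat.centralBinom k := by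
      exact_mod_cast congrArg (Nat.cast : ℕ → ℝ) h
    have hk : ((k:ℝ)+1) ≠ 0 := by positivity
    have h2 : (Nat.centralBinom (k+1) : ℝ) = 2*(2*(k:ℝ)+1) * Nat.centralBinom k / ((k:ℝ)+1) := by
      field_simp
      linarith [h']
    rw [h2, ih, prod_range_succ, pow_succ]
    field_simp
    ring

lemma cb_key (n : ℕ) :
    (∫ x in (-2:ℝ)..2, x ^ n / (π * Real.sqrt (4 - x ^ 2)))
      = 2^n/π * ∫ x in (0:ℝ)..π, Real.cos x ^ n := by
  have himg : (fun θ : ℝ => 2 * Real.cos θ) '' Set.Ioo 0 π = Set.Ioo (-2:ℝ) 2 := by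
    ext x
    constructor
    · rintro ⟨θ, ⟨h1, h2⟩, rfl⟩
      have hθ : θ ∈ Set.Icc 0 π := ⟨h1.le, h2.le⟩
      have c1 : Real.cos θ < Real.cos 0 :=
        Real.strictAntiOn_cos (Set.left_mem_Icc.2 Real.pi_pos.le) hθ h1
      have c2 : Real.cos π < Real.cos θ :=
        Real.strictAntiOn_cos hθ (Set.right_mem_Icc.2 Real.pi_pos.le) h2
      rw [Real.cos_zero] at c1
      rw [Real.cos_pi] at c2
      exact ⟨by simp only; linarith, by simp only; linarith⟩
    · rintro ⟨hx1, hx2⟩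
      refine ⟨Real.arccos (x/2), ⟨?_, ?_⟩, ?_⟩
      · exact Real.arccos_pos.2 (by linarith)
      · refine lt_of_le_of_ne (Real.arccos_le_pi _) fun h => ?_
        have := Real.arccos_eq_pi.1 h
        linarith
      · simp only
        rw [Real.cos_arccos (by linarith) (by linarith)]
        ring
  have hderiv : ∀ θ ∈ Set.Ioo (0:ℝ) π,
      HasDerivWithinAt (fun θ => 2 * Real.cos θ) (2 * (-Real.sin θ)) (Set.Ioo 0 π) θ :=
    fun θ _ => ((Real.hasDerivAt_cos θ).const_mul 2).hasDerivWithinAt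
  have hinj : Set.InjOn (fun θ : ℝ => 2 * Real.cos θ) (Set.Ioo 0 π) := by
    intro a ha b hb hab
    refine Real.injOn_cos (Set.Ioo_subset_Icc_self ha) (Set.Ioo_subset_Icc_self hb) ?_
    simp only at hab
    linarith
  rw [intervalIntegral.integral_of_le (by norm_num : (-2:ℝ) ≤ 2),
    MeasureTheory.integral_Ioc_eq_integral_Ioo, ← himg,
    MeasureTheory.integral_image_eq_integral_abs_deriv_smul measurableSet_Ioo hderiv hinj,
    intervalIntegral.integral_of_le Real.pi_pos.le,
    MeasureTheory.integral_Ioc_eq_integral_Ioo, ← MeasureTheory.integral_const_mul]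
  apply MeasureTheory.setIntegral_congr_fun measurableSet_Ioo
  rintro θ ⟨h1, h2⟩
  have hs : 0 < Real.sin θ := Real.sin_pos_of_pos_of_lt_pi h1 h2
  have h4 : 4 - (2 * Real.cos θ) ^ 2 = (2 * Real.sin θ) ^ 2 := by
    have := Real.sin_sq_add_cos_sq θ
    nlinarith
  have habs : |2 * (-Real.sin θ)| = 2 * Real.sin θ := by
    rw [abs_of_nonpos (by nlinarith)]
    ring
  simp only [smul_eq_mul]
  rw [h4, Real.sqrt_sq (by positivity), habs, mul_pow]
  have hπ : (π:ℝ) ≠ 0 := Real.pi_ne_zero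
  field_simp

theorem central_binom_integral (n : ℕ) :
    (if Even n then ((n.choose (n / 2) : ℝ)) else 0) =
      ∫ x in (-2 : ℝ)..2, x ^ n / (Real.pi * Real.sqrt (4 - x ^ 2)) := by
  rw [cb_key]
  rcases Nat.even_or_odd n with he | ho
  · obtain ⟨k, hk⟩ := he
    have hn : n = 2 * k := by omega
    subst hn
    rw [if_pos (by exact ⟨k, by ring⟩)]
    have hch : (2*k).choose (2*k/2) = Nat.centralBinom k := by
      rw [Nat.centralBinom]
      congr 1
      omega
    rw [hch, cos_pow_even_int, centralBinom_eq_prod]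
    have hπ : (π:ℝ) ≠ 0 := Real.pi_ne_zero
    rw [pow_mul]
    field_simp
    ring
  · obtain ⟨k, hk⟩ := ho
    subst hk
    rw [if_neg (by simp [Nat.even_add_one, parity_simps]), cos_pow_odd_int]
    ring
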